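/- arXiv:2407.02242 — 2 statements merged into one kernel-verified Lean document; each statement's English description precedes it below -/
import Mathlib

section
/- Let y, F, G \in \mathbb{R}^n with L(F+G) < L(F) where L(v) := |y - v|^2. Then 2 (y - F) \cdot (G / |G|) \geq (L(F) - L(F+G)) / (2 \sqrt{L(F)}). -/
open scoped InnerProductSpace

theorem stmt_6 (n : ℕ) (y F G : EuclideanSpace ℝ (Fin n))
    (h : ‖y - (F + G)‖ ^ 2 < ‖y - F‖ ^ 2) :
    2 * ⟪y - F, (1 / ‖G‖) • G⟫_ℝ ≥
      (‖y - F‖ ^ 2 - ‖y - (F + G)‖ ^ 2) / (2 * Real.sqrt (‖y - F‖ ^ 2)) := by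
  have hrw : y - (F + G) = (y - F) - G := by abel
  rw [hrw] at h ⊢
  have hkey : ‖y - F - G‖ ^ 2 = ‖y - F‖ ^ 2 - 2 * ⟪y - F, G⟫_ℝ + ‖G‖ ^ 2 :=
    norm_sub_sq_real _ _
  rw [hkey] at h ⊢
  rw [Real.sqrt_sq (norm_nonneg _), real_inner_smul_right]
  set a := ‖y - F‖ with ha
  set g := ‖G‖ with hg
  set s := ⟪y - F, G⟫_ℝ with hs
  have hcs : s ≤ a * g := real_inner_le_norm _ _
  have hga : 0 ≤ g := norm_nonneg _
  have hs' : g ^ 2 < 2 * s := by nlinarith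
  have hgpos : 0 < g := by
    rcases eq_or_lt_of_le hga with h' | h'
    · exfalso; rw [← h'] at hs' hcs; nlinarith
    · exact h'
  have hapos : 0 < a := by nlinarith
  have hrw2 : 2 * ((1 / g) * s) = 2 * s / g := by ring
  rw [ge_iff_le, hrw2, div_le_div_iff₀ (by positivity) hgpos]
  nlinarith
end

section
/- Let y, F_0, F, G \in \mathbb{R}^n with L(v) := |y-v|^2, \frac{\sqrt{5}-1}{2} < \kappa < 1, \mu := (\kappa - \sqrt{1-\kappa})^2. Suppose (y - F) \cdot (F - F_0) = 0, L(F) \leq L(F_0), L(F_0 + G) \leq \mu L(F_0), and L(F) \geq \kappa L(F_0). Then L(F + G) \leq \kappa L(F). -/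
open scoped InnerProductSpace

theorem stmt_13 (n : ℕ) (y F₀ F G : EuclideanSpace ℝ (Fin n))
    (κ : ℝ) (hκ0 : (Real.sqrt 5 - 1) / 2 < κ) (hκ1 : κ < 1)
    (horth : ⟪y - F, F - F₀⟫_ℝ = 0)
    (hle : ‖y - F‖ ^ 2 ≤ ‖y - F₀‖ ^ 2)
    (hG : ‖y - (F₀ + G)‖ ^ 2 ≤ (κ - Real.sqrt (1 - κ)) ^ 2 * ‖y - F₀‖ ^ 2)
    (hstall : ‖y - F‖ ^ 2 ≥ κ * ‖y - F₀‖ ^ 2) :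
    ‖y - (F + G)‖ ^ 2 ≤ κ * ‖y - F‖ ^ 2 := by
  set a := ‖y - F₀‖ with ha
  set b := ‖y - F‖ with hb
  have hs5 : Real.sqrt 5 ^ 2 = 5 := Real.sq_sqrt (by norm_num)
  have hκpos : 0 < κ := by
    nlinarith [Real.sqrt_nonneg 5, sq_nonneg (Real.sqrt 5 - 2)]
  have hkey : 1 - κ ≤ κ ^ 2 := by
    nlinarith [Real.sqrt_nonneg 5, sq_nonneg (2 * κ + 1 - Real.sqrt 5)]
  have h1κ : (0:ℝ) ≤ 1 - κ := by linarith
  have hsq : Real.sqrt (1 - κ) ^ 2 = 1 - κ := Real.sq_sqrt h1κ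
  have hsqle : Real.sqrt (1 - κ) ≤ κ := by
    have := Real.sqrt_le_sqrt hkey
    rwa [Real.sqrt_sq hκpos.le] at this
  -- Pythagoras
  have h1 : y - F₀ = (y - F) + (F - F₀) := by abel
  have hpyth : a ^ 2 = b ^ 2 + ‖F - F₀‖ ^ 2 := by
    rw [ha, h1, norm_add_sq_real, horth]; ring
  -- bound on ‖F₀ - F‖
  have hFF : ‖F₀ - F‖ ^ 2 ≤ (1 - κ) * a ^ 2 := by
    rw [show F₀ - F = -(F - F₀) by abel, norm_neg]
    nlinarith
  have hFF' : ‖F₀ - F‖ ≤ Real.sqrt (1 - κ) * a := by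
    have h4 : ‖F₀ - F‖ ^ 2 ≤ (Real.sqrt (1 - κ) * a) ^ 2 := by
      rw [mul_pow, hsq]; exact hFF
    have := Real.sqrt_le_sqrt h4
    rwa [Real.sqrt_sq (norm_nonneg _),
      Real.sqrt_sq (mul_nonneg (Real.sqrt_nonneg _) (norm_nonneg _))] at this
  have hG' : ‖y - (F₀ + G)‖ ≤ (κ - Real.sqrt (1 - κ)) * a := by
    have h4 : ‖y - (F₀ + G)‖ ^ 2 ≤ ((κ - Real.sqrt (1 - κ)) * a) ^ 2 := by
      rw [mul_pow]; exact hG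
    have := Real.sqrt_le_sqrt h4
    rwa [Real.sqrt_sq (norm_nonneg _),
      Real.sqrt_sq (mul_nonneg (sub_nonneg.2 hsqle) (norm_nonneg _))] at this
  have h2 : y - (F + G) = (y - (F₀ + G)) + (F₀ - F) := by abel
  have htri : ‖y - (F + G)‖ ≤ (κ - Real.sqrt (1 - κ)) * a + Real.sqrt (1 - κ) * a := by
    calc ‖y - (F + G)‖ ≤ ‖y - (F₀ + G)‖ + ‖F₀ - F‖ := by rw [h2]; exact norm_add_le _ _
    _ ≤ _ := add_le_add hG' hFF'
  have htri' : ‖y - (F + G)‖ ≤ κ * a := by linarith [htri]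
  have h5 : ‖y - (F + G)‖ ^ 2 ≤ (κ * a) ^ 2 :=
    pow_le_pow_left₀ (norm_nonneg _) htri' 2
  calc ‖y - (F + G)‖ ^ 2 ≤ (κ * a) ^ 2 := h5
    _ = κ * (κ * a ^ 2) := by ring
    _ ≤ κ * b ^ 2 := mul_le_mul_of_nonneg_left hstall hκpos.le
end
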